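/- Let G, H be finite abelian groups, A ⊆ G, B ⊆ H, and t: A → H any function, with P_t = ∪_{a∈A} {a} × (t(a)+B). Suppose there exist nonnegative functions w_A: G → ℝ and w_B: H → ℝ with w_A(0)=1, w_B(0)=1, nonnegative Fourier transforms, and 1_A ∗ w_A = 1_G, 1_B ∗ w_B = 1_H. Then 1_{P_t} ∗ (w_A ⊗ w_B) = 1_{G×H}, and w_A ⊗ w_B is nonnegative with (w_A ⊗ w_B)(0,0)=1 and nonnegative Fourier transform; hence P_t pd-tiles G × H. -/
import Mathlib


open scoped ComplexOrder

/-- If `1_A ∗ w_A = 1_G` and `1_B ∗ w_B = 1_H` are pd-tilings of `G` and `H`, then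
for any `t : A → H`, the set `P_t = ⋃_{a ∈ A} {a} × (t a + B)` satisfies
`1_{P_t} ∗ (w_A ⊗ w_B) = 1_{G×H}`, where `w_A ⊗ w_B` is nonnegative, takes the value
`1` at the origin, and has nonnegative Fourier transform; hence `P_t` pd-tiles `G × H`. -/
theorem Pt_pd_tiles
    {G H : Type*} [AddCommGroup G] [AddCommGroup H] [Fintype G] [Fintype H]
    (A : Set G) (B : Set H) (t : A → H)
    (wA : G → ℝ) (wB : H → ℝ)
    (hwA0 : wA 0 = 1) (hwB0 : wB 0 = 1)
    (hwAnn : ∀ g, 0 ≤ wA g) (hwBnn : ∀ h, 0 ≤ wB h)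
    (hwAft : ∀ γ : AddChar G ℂ, 0 ≤ ∑ g : G, (wA g : ℂ) * γ g)
    (hwBft : ∀ ρ : AddChar H ℂ, 0 ≤ ∑ h : H, (wB h : ℂ) * ρ h)
    (htileA : ∀ x : G, ∑ y : G, A.indicator (fun _ => (1 : ℝ)) y * wA (x - y) = 1)
    (htileB : ∀ x : H, ∑ y : H, B.indicator (fun _ => (1 : ℝ)) y * wB (x - y) = 1) :
    (∀ z : G × H,
      ∑ w : G × H, (⋃ a : A, {(a : G)} ×ˢ ((t a + ·) '' B)).indicator
          (fun _ => (1 : ℝ)) w * (wA (z.1 - w.1) * wB (z.2 - w.2)) = 1) ∧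
    (∀ z : G × H, 0 ≤ wA z.1 * wB z.2) ∧
    (wA 0 * wB 0 = 1) ∧
    (∀ (γ : AddChar G ℂ) (ρ : AddChar H ℂ),
      0 ≤ ∑ z : G × H, ((wA z.1 * wB z.2 : ℝ) : ℂ) * (γ z.1 * ρ z.2)) := by
  refine ⟨?_, fun z => mul_nonneg (hwAnn z.1) (hwBnn z.2),
    by rw [hwA0, hwB0, mul_one], ?_⟩
  · intro z
    rw [Fintype.sum_prod_type]
    have step : ∀ g : G, (∑ h : H, (⋃ a : A, {(a : G)} ×ˢ ((t a + ·) '' B)).indicator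
          (fun _ => (1 : ℝ)) (g, h) * (wA (z.1 - g) * wB (z.2 - h)))
        = A.indicator (fun _ => (1 : ℝ)) g * wA (z.1 - g) := by
      intro g
      by_cases hg : g ∈ A
      · have hmem : ∀ h : H, (⋃ a : A, {(a : G)} ×ˢ ((t a + ·) '' B)).indicator
            (fun _ => (1 : ℝ)) (g, h) = B.indicator (fun _ => (1 : ℝ)) (h - t ⟨g, hg⟩) := by
          intro h
          by_cases hb : h - t ⟨g, hg⟩ ∈ B
          · rw [Set.indicator_of_mem _, Set.indicator_of_mem hb]
            exact Set.mem_iUnion.2 ⟨⟨g, hg⟩,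
              ⟨rfl, ⟨h - t ⟨g, hg⟩, hb, add_sub_cancel _ _⟩⟩⟩
          · rw [Set.indicator_of_notMem _, Set.indicator_of_notMem hb]
            intro hmem'
            obtain ⟨a, ha⟩ := Set.mem_iUnion.1 hmem'
            obtain ⟨hga, b, hbB, hhb⟩ := ha
            have hga' : g = (a : G) := hga
            have haeq : a = ⟨g, hg⟩ := Subtype.ext hga'.symm
            subst haeq
            have hb' : b = h - t ⟨g, hg⟩ := eq_sub_of_add_eq' hhb
            exact hb (hb' ▸ hbB)
        simp only [hmem]
        calc ∑ h : H, B.indicator (fun _ => (1 : ℝ)) (h - t ⟨g, hg⟩) * (wA (z.1 - g) * wB (z.2 - h))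
            = wA (z.1 - g) * ∑ h : H, B.indicator (fun _ => (1 : ℝ)) (h - t ⟨g, hg⟩) * wB (z.2 - h) := by
              rw [Finset.mul_sum]; exact Finset.sum_congr rfl fun h _ => by ring
          _ = wA (z.1 - g) * 1 := by
              congr 1
              refine Eq.trans ?_ (htileB (z.2 - t ⟨g, hg⟩))
              apply Fintype.sum_equiv (Equiv.subRight (t ⟨g, hg⟩))
              intro h
              simp only [Equiv.subRight_apply]
              have hE : z.2 - t ⟨g, hg⟩ - (h - t ⟨g, hg⟩) = z.2 - h := by abel
              rw [hE]
          _ = _ := by rw [mul_one, Set.indicator_of_mem hg, one_mul]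
      · have hzero : ∀ h : H, (⋃ a : A, {(a : G)} ×ˢ ((t a + ·) '' B)).indicator
            (fun _ => (1 : ℝ)) (g, h) = 0 := by
          intro h
          apply Set.indicator_of_notMem
          intro hmem'
          obtain ⟨a, ha⟩ := Set.mem_iUnion.1 hmem'
          have hga' : g = (a : G) := ha.1
          exact hg (by rw [hga']; exact a.2)
        rw [Set.indicator_of_notMem hg, zero_mul]
        exact Finset.sum_eq_zero fun h _ => by rw [hzero h, zero_mul]
    exact (Finset.sum_congr rfl fun g _ => step g).trans (htileA z.1)
  · intro γ ρ
    have key : ∑ z : G × H, ((wA z.1 * wB z.2 : ℝ) : ℂ) * (γ z.1 * ρ z.2)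
        = (∑ g : G, (wA g : ℂ) * γ g) * (∑ h : H, (wB h : ℂ) * ρ h) := by
      rw [Finset.sum_mul_sum, Fintype.sum_prod_type]
      exact Finset.sum_congr rfl fun g _ => Finset.sum_congr rfl fun h _ => by push_cast; ring
    rw [key]
    exact mul_nonneg (hwAft γ) (hwBft ρ)
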